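/- Let (X,T,m,α) be a Gibbs-Markov map with the big preimage property: there exist a_1,...,a_n∈α such that every element of α is contained mod 0 in the image of some a_i. Let f:X→G be essentially bounded on each a_i and u:X→G measurable with f=u-u∘T a.e. and u essentially bounded on each a_i. Then u is essentially bounded on X, with ‖u‖_∞ ≤ max_i(‖u|_{a_i}‖_∞ + ‖f|_{a_i}‖_∞). -/
import Mathlib


open MeasureTheory Filter ENNReal

variable {X G ι : Type*}

/-- The essential Lipschitz constant of `f` on the set `Z`:
the infimum of constants `C` such that `edist (f x) (f y) ≤ C * edist x y`
for `x, y` in a full-measure subset of `Z`. -/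
noncomputable def essLip [PseudoEMetricSpace X] [PseudoEMetricSpace G] [MeasurableSpace X]
    (m : Measure X) (f : X → G) (Z : Set X) : ℝ≥0∞ :=
  sInf {C : ℝ≥0∞ | ∃ Ω : Set X, Ω ⊆ Z ∧ m (Z \ Ω) = 0 ∧
    ∀ x ∈ Ω, ∀ y ∈ Ω, edist (f x) (f y) ≤ C * edist x y}

/-- A Gibbs-Markov map: a nonsingular map `T` on a bounded metric probability space
with a countable Markov partition `α` of positive-measure sets, with big images and
preimages, expansion by a factor `lam > 1`, and bounded distortion of the inverse
Jacobian `g`. -/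
structure GibbsMarkov [MetricSpace X] [MeasurableSpace X]
    (m : Measure X) (T : X → X) (α : ι → Set X) (lam : ℝ) : Prop where
  countable : Countable ι
  bounded : Bornology.IsBounded (Set.univ : Set X)
  measT : Measurable T
  meas : ∀ i, MeasurableSet (α i)
  pos : ∀ i, 0 < m (α i)
  disj : Pairwise (Function.onFun Disjoint α)
  cover : m (⋃ i, α i)ᶜ = 0
  inj : ∀ i, Set.InjOn T (α i)
  markov : ∀ i, ∃ s : Set ι, m (symmDiff (T '' α i) (⋃ j ∈ s, α j)) = 0
  bip : ∃ F : Finset ι, ∀ i : ι, (∃ i' ∈ F, m (α i \ T '' α i') = 0) ∧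
        (∃ j' ∈ F, m (α j' \ T '' α i) = 0)
  one_lt_lam : 1 < lam
  expand : ∀ i, ∃ Ω : Set X, Ω ⊆ α i ∧ m (α i \ Ω) = 0 ∧
      ∀ x ∈ Ω, ∀ y ∈ Ω, lam * dist x y ≤ dist (T x) (T y)
  distortion : ∃ g : X → ℝ, (∀ x, 0 < g x) ∧
      (∀ i, ∀ s : Set X, s ⊆ α i → MeasurableSet s →
        m (T '' s) = ∫⁻ x in s, ENNReal.ofReal (g x)⁻¹ ∂m) ∧
      ∃ C : ℝ, 0 < C ∧ ∀ i, ∃ Ω : Set X, Ω ⊆ α i ∧ m (α i \ Ω) = 0 ∧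
        ∀ x ∈ Ω, ∀ y ∈ Ω, |1 - g x / g y| ≤ C * dist (T x) (T y)

/-- `A` is an atom of the partition `α*` generated by the images of the elements
of the partition `α` under `T`. -/
def isImageAtom (T : X → X) (α : ι → Set X) (A : Set X) : Prop :=
  A.Nonempty ∧ ∃ S : Set ι,
    A = (⋂ i ∈ S, T '' α i) ∩ (⋂ i ∈ Sᶜ, (T '' α i)ᶜ)

/-- Essential boundedness from the big preimage property: if every element of `α` is
contained mod 0 in the image of one of `a₁,…,aₙ ∈ α`, and `f`, `u` are essentially
bounded on each `aᵢ`, with `f = u - u ∘ T` a.e., then `u` is essentially bounded,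
with bound `maxᵢ (‖u|_{aᵢ}‖_∞ + ‖f|_{aᵢ}‖_∞)`. -/
theorem gibbs_markov_essentially_bounded
    [MetricSpace X] [MeasurableSpace X] [BorelSpace X]
    [MetricSpace G] [AddCommGroup G] [MeasurableSpace G] [BorelSpace G]
    [LocallyCompactSpace G]
    (hinv : ∀ g x y : G, dist (g + x) (g + y) = dist x y)
    (m : Measure X) [IsProbabilityMeasure m]
    (T : X → X)
    (α : ι → Set X) (lam : ℝ) (hGM : GibbsMarkov m T α lam)
    (F : Finset ι) (hF : F.Nonempty)
    (hbigpre : ∀ j : ι, ∃ i ∈ F, m (α j \ T '' α i) = 0)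
    (f u : X → G) (hu : Measurable u)
    (hcob : ∀ᵐ x ∂m, f x = u x - u (T x))
    (Mu Mf : ι → ℝ)
    (hMu : ∀ i ∈ F, ∀ᵐ x ∂(m.restrict (α i)), dist (u x) 0 ≤ Mu i)
    (hMf : ∀ i ∈ F, ∀ᵐ x ∂(m.restrict (α i)), dist (f x) 0 ≤ Mf i) :
    ∀ᵐ x ∂m, dist (u x) 0 ≤ F.sup' hF (fun i => Mu i + Mf i) := by
  haveI := hGM.countable
  obtain ⟨g, hgpos, hjac, -⟩ := hGM.distortion
  set B := F.sup' hF (fun i => Mu i + Mf i) with hB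
  -- triangle inequality for invariant metric
  have tri : ∀ a b : G, dist (a - b) 0 ≤ dist a 0 + dist b 0 := by
    intro a b
    have h1 : dist (a - b) (-b) = dist a 0 := by
      have := hinv (-b) a 0
      simpa [sub_eq_neg_add] using this
    have h2 : dist (-b : G) 0 = dist b 0 := by
      have := hinv b (-b) 0
      simp only [add_neg_cancel, add_zero] at this
      rw [← this, dist_comm]
    calc dist (a - b) 0 ≤ dist (a - b) (-b) + dist (-b) 0 := dist_triangle _ _ _
      _ = dist a 0 + dist b 0 := by rw [h1, h2]
  -- key step: for each j, a.e. point of α j satisfies the bound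
  have key : ∀ j : ι, ∃ N : Set X, m N = 0 ∧
      ∀ x ∈ α j \ N, dist (u x) 0 ≤ B := by
    intro j
    obtain ⟨i, hiF, hi0⟩ := hbigpre j
    -- the good set inside α i
    have hae : ∀ᵐ x ∂(m.restrict (α i)),
        dist (u x) 0 ≤ Mu i ∧ dist (f x) 0 ≤ Mf i ∧ f x = u x - u (T x) := by
      filter_upwards [hMu i hiF, hMf i hiF, ae_restrict_of_ae hcob] with x h1 h2 h3
      exact ⟨h1, h2, h3⟩
    rw [ae_iff] at hae
    obtain ⟨t, hbt, htm, ht0⟩ := exists_measurable_superset_of_null hae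
    have ht0' : m (α i ∩ t) = 0 := by
      rw [Set.inter_comm, ← Measure.restrict_apply' (hGM.meas i)]
      exact ht0
    -- image of the bad part is null
    have himg0 : m (T '' (α i ∩ t)) = 0 := by
      rw [hjac i (α i ∩ t) Set.inter_subset_left ((hGM.meas i).inter htm)]
      exact setLIntegral_measure_zero _ _ ht0'
    refine ⟨(α j \ T '' α i) ∪ T '' (α i ∩ t), ?_, ?_⟩
    · exact measure_union_null hi0 himg0
    · rintro x ⟨hxj, hxN⟩
      simp only [Set.mem_union, not_or] at hxN
      have hx1 : x ∈ T '' α i := by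
        by_contra h
        exact hxN.1 ⟨hxj, h⟩
      obtain ⟨x', hx', rfl⟩ := hx1
      have hx't : x' ∉ t := by
        intro h
        exact hxN.2 ⟨x', ⟨hx', h⟩, rfl⟩
      have hP : dist (u x') 0 ≤ Mu i ∧ dist (f x') 0 ≤ Mf i ∧
          f x' = u x' - u (T x') := by
        by_contra h
        exact hx't (hbt h)
      obtain ⟨h1, h2, h3⟩ := hP
      have huT : u (T x') = u x' - f x' := by rw [h3]; abel
      calc dist (u (T x')) 0 = dist (u x' - f x') 0 := by rw [huT]
        _ ≤ dist (u x') 0 + dist (f x') 0 := tri _ _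
        _ ≤ Mu i + Mf i := add_le_add h1 h2
        _ ≤ B := Finset.le_sup' (fun i => Mu i + Mf i) hiF
  choose N hN0 hNbound using key
  have hUN : m (⋃ j, N j) = 0 := measure_iUnion_null hN0
  have hcover := hGM.cover
  rw [ae_iff]
  refine measure_mono_null ?_ (measure_union_null hcover hUN)
  intro x hx
  simp only [Set.mem_setOf_eq, not_le] at hx
  by_cases hx1 : x ∈ ⋃ i, α i
  · obtain ⟨j, hj⟩ := Set.mem_iUnion.mp hx1
    right
    by_contra h
    have hxN : x ∉ N j := fun hc => h (Set.mem_iUnion.mpr ⟨j, hc⟩)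
    exact absurd (hNbound j x ⟨hj, hxN⟩) (not_le.mpr hx)
  · exact Or.inl hx1
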